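/- arXiv:2506.23082 — 3 statements merged into one kernel-verified Lean document; each statement's English description precedes it below -/
import Mathlib

section
/- For any sequences of integers (a_1, a_2, ...) and (b_1, b_2, ...) with finitely many nonzero terms, the sum over pairs 1 ≤ i ≤ j of (a_i − b_i)(b_j − a_{j+1}) equals the sum over i ≥ 1 of (binom(a_i, 2) − binom(b_i, 2)) minus binom(Σ_{i≥1}(a_i − b_i), 2). -/
open Finset

/-- `binom2 c = c(c-1)/2`, the polynomial binomial coefficient `binom(c,2)`
interpreted for all integers `c` (the division is exact). -/
def binom2 (c : ℤ) : ℤ := c * (c - 1) / 2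

lemma two_binom2 (c : ℤ) : 2 * binom2 c = c * (c - 1) := by
  have h : (2 : ℤ) ∣ c * (c - 1) := by
    have := Int.even_mul_succ_self (c - 1)
    have : Even (c * (c - 1)) := by simpa [mul_comm, sub_add_cancel] using this
    exact this.two_dvd
  rw [binom2, Int.mul_ediv_cancel' h]

lemma key (a b : ℕ → ℤ) (N : ℕ) :
    2 * ∑ i ∈ Finset.Icc 1 N, ∑ j ∈ Finset.Icc i N, (a i - b i) * (b j - a (j + 1))
      = (∑ i ∈ Finset.Icc 1 N, (a i * (a i - 1) - b i * (b i - 1)))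
        - (∑ i ∈ Finset.Icc 1 N, (a i - b i)) * ((∑ i ∈ Finset.Icc 1 N, (a i - b i)) - 1)
        - 2 * (∑ i ∈ Finset.Icc 1 N, (a i - b i)) * a (N + 1) := by
  induction N with
  | zero => simp
  | succ n ih =>
    have h1 : (1 : ℕ) ≤ n + 1 := Nat.le_add_left 1 n
    rw [Finset.sum_Icc_succ_top h1, Finset.sum_Icc_succ_top h1,
        Finset.sum_Icc_succ_top h1]
    have hinner : ∀ i ∈ Finset.Icc 1 n,
        (∑ j ∈ Finset.Icc i (n + 1), (a i - b i) * (b j - a (j + 1)))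
          = (∑ j ∈ Finset.Icc i n, (a i - b i) * (b j - a (j + 1)))
            + (a i - b i) * (b (n + 1) - a (n + 2)) := by
      intro i hi
      exact Finset.sum_Icc_succ_top (le_trans (Finset.mem_Icc.mp hi).2 (Nat.le_succ n)) _
    rw [Finset.sum_congr rfl hinner, Finset.sum_add_distrib, Finset.Icc_self,
        Finset.sum_singleton, ← Finset.sum_mul]
    set T := ∑ i ∈ Finset.Icc 1 n, (a i - b i) with hT
    linear_combination ih

/-- Lemma 4.6 of the paper: for integer sequences `a, b` with finitely many nonzero
terms (all terms beyond `N` vanish),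
`Σ_{1 ≤ i ≤ j} (a_i - b_i)(b_j - a_{j+1})
  = Σ_{i ≥ 1} (binom(a_i,2) - binom(b_i,2)) - binom(Σ_{i≥1}(a_i - b_i), 2)`. -/
theorem stmt0 (N : ℕ) (a b : ℕ → ℤ)
    (ha : ∀ i, N < i → a i = 0) (hb : ∀ i, N < i → b i = 0) :
    ∑ i ∈ Finset.Icc 1 N, ∑ j ∈ Finset.Icc i N, (a i - b i) * (b j - a (j + 1))
      = (∑ i ∈ Finset.Icc 1 N, (binom2 (a i) - binom2 (b i)))
        - binom2 (∑ i ∈ Finset.Icc 1 N, (a i - b i)) := by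
  have h := key a b N
  rw [ha (N + 1) (Nat.lt_succ_self N)] at h
  have hsum : ∑ i ∈ Finset.Icc 1 N, (a i * (a i - 1) - b i * (b i - 1))
      = 2 * ∑ i ∈ Finset.Icc 1 N, (binom2 (a i) - binom2 (b i)) := by
    rw [Finset.mul_sum]
    refine Finset.sum_congr rfl fun i _ => ?_
    have h1 := two_binom2 (a i)
    have h2 := two_binom2 (b i)
    linarith
  rw [hsum] at h
  have hT := two_binom2 (∑ i ∈ Finset.Icc 1 N, (a i - b i))
  linarith
end

section
/- Let ν be a partition of n+k and μ a partition of n with ν/μ a vertical strip. Then n(ν) − n(μ) − binom(k,2) = Σ_{1 ≤ i ≤ j} (ν'_i − μ'_i)(μ'_j − ν'_{j+1}), where n(λ) = Σ_{i≥1} (i−1)λ_i. -/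
open Finset

def conjP (N : ℕ) (lam : ℕ → ℕ) (j : ℕ) : ℕ :=
  ((Finset.Icc 1 N).filter (fun i => j ≤ lam i)).card

lemma gauss (m : ℕ) : ∑ i ∈ Icc 1 m, (i - 1) = m.choose 2 := by
  induction m with
  | zero => simp
  | succ n ih =>
    rw [Finset.sum_Icc_succ_top (by omega : 1 ≤ n + 1), ih]
    have h : (n + 1).choose 2 = n.choose 1 + n.choose 2 := Nat.choose_succ_succ n 1
    rw [h, Nat.choose_one_right]
    omega

lemma two_mul_choose_two (n : ℕ) : 2 * n.choose 2 = n * (n - 1) := by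
  induction n with
  | zero => rfl
  | succ n ih =>
    rw [Nat.choose_succ_succ, Nat.mul_add, ih, Nat.choose_one_right]
    cases n with
    | zero => rfl
    | succ m => simp [Nat.succ_sub_one]; ring

lemma cast2 (n : ℕ) : ((n.choose 2 : ℕ) : ℤ) * 2 = (n : ℤ) * ((n : ℤ) - 1) := by
  have h := two_mul_choose_two n
  rcases Nat.eq_zero_or_pos n with h0 | h1
  · subst h0; simp
  · zify [h1] at h; linarith

lemma prefix_filter (N : ℕ) (lam : ℕ → ℕ)
    (hmono : ∀ i j, 1 ≤ i → i ≤ j → lam j ≤ lam i) (j : ℕ) :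
    (Icc 1 N).filter (fun i => j ≤ lam i) = Icc 1 (conjP N lam j) := by
  induction N with
  | zero => simp [conjP]
  | succ N ih =>
    by_cases h : j ≤ lam (N + 1)
    · have hall : ∀ i ∈ Icc 1 (N + 1), j ≤ lam i := by
        intro i hi
        rw [mem_Icc] at hi
        exact le_trans h (hmono i (N + 1) hi.1 hi.2)
      rw [filter_true_of_mem hall]
      unfold conjP
      rw [filter_true_of_mem hall, Nat.card_Icc]
      congr 1
    · have hf : (Icc 1 (N + 1)).filter (fun i => j ≤ lam i)
          = (Icc 1 N).filter (fun i => j ≤ lam i) := by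
        ext i
        simp only [mem_filter, mem_Icc]
        constructor
        · rintro ⟨⟨h1, h2⟩, h3⟩
          have : i ≠ N + 1 := fun e => h (e ▸ h3)
          exact ⟨⟨h1, by omega⟩, h3⟩
        · rintro ⟨⟨h1, h2⟩, h3⟩
          exact ⟨⟨h1, by omega⟩, h3⟩
      have hc : conjP (N + 1) lam j = conjP N lam j := by
        unfold conjP; rw [hf]
      rw [hf, hc]; exact ih

lemma sum_nlam (N M : ℕ) (lam : ℕ → ℕ)
    (hmono : ∀ i j, 1 ≤ i → i ≤ j → lam j ≤ lam i)
    (hM : ∀ i ∈ Icc 1 N, lam i ≤ M) :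
    ∑ i ∈ Icc 1 N, (i - 1) * lam i = ∑ j ∈ Icc 1 M, (conjP N lam j).choose 2 := by
  have h1 : ∀ j, (conjP N lam j).choose 2
      = ∑ i ∈ Icc 1 N, (if j ≤ lam i then (i - 1) else 0) := by
    intro j
    rw [← gauss, ← prefix_filter N lam hmono j, Finset.sum_filter]
  calc ∑ i ∈ Icc 1 N, (i - 1) * lam i
      = ∑ i ∈ Icc 1 N, ∑ j ∈ Icc 1 M, (if j ≤ lam i then (i - 1) else 0) := by
        apply Finset.sum_congr rfl
        intro i hi
        rw [← Finset.sum_filter]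
        have hfe : (Icc 1 M).filter (fun j => j ≤ lam i) = Icc 1 (lam i) := by
          ext j
          simp only [mem_filter, mem_Icc]
          have := hM i hi
          omega
        rw [hfe, Finset.sum_const, Nat.card_Icc]
        simp [Nat.mul_comm]
    _ = ∑ j ∈ Icc 1 M, ∑ i ∈ Icc 1 N, (if j ≤ lam i then (i - 1) else 0) :=
        Finset.sum_comm
    _ = ∑ j ∈ Icc 1 M, (conjP N lam j).choose 2 := by
        exact Finset.sum_congr rfl fun j _ => (h1 j).symm

lemma sum_conjP (N M : ℕ) (lam : ℕ → ℕ)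
    (hM : ∀ i ∈ Icc 1 N, lam i ≤ M) :
    ∑ j ∈ Icc 1 M, conjP N lam j = ∑ i ∈ Icc 1 N, lam i := by
  unfold conjP
  calc ∑ j ∈ Icc 1 M, ((Icc 1 N).filter (fun i => j ≤ lam i)).card
      = ∑ j ∈ Icc 1 M, ∑ i ∈ Icc 1 N, (if j ≤ lam i then 1 else 0) := by
        apply Finset.sum_congr rfl
        intro j _
        rw [← Finset.sum_filter, Finset.sum_const, smul_eq_mul, Nat.mul_one]
    _ = ∑ i ∈ Icc 1 N, ∑ j ∈ Icc 1 M, (if j ≤ lam i then 1 else 0) :=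
        Finset.sum_comm
    _ = ∑ i ∈ Icc 1 N, lam i := by
        apply Finset.sum_congr rfl
        intro i hi
        rw [← Finset.sum_filter]
        have hfe : (Icc 1 M).filter (fun j => j ≤ lam i) = Icc 1 (lam i) := by
          ext j
          simp only [mem_filter, mem_Icc]
          have := hM i hi
          omega
        rw [hfe, Finset.sum_const, Nat.card_Icc]
        simp

lemma keyE (c m : ℕ → ℤ) (M : ℕ) :
    ∑ j ∈ Icc 1 M, (c j * (c j - 1) - m j * (m j - 1))
      - (∑ j ∈ Icc 1 M, (c j - m j)) * ((∑ j ∈ Icc 1 M, (c j - m j)) - 1)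
      - 2 * ∑ i ∈ Icc 1 M, ∑ j ∈ Icc i M, (c i - m i) * (m j - c (j + 1))
      = 2 * (∑ j ∈ Icc 1 M, (c j - m j)) * c (M + 1) := by
  induction M with
  | zero => simp
  | succ M ih =>
    have h1 : (1 : ℕ) ≤ M + 1 := by omega
    rw [Finset.sum_Icc_succ_top h1 (fun j => c j * (c j - 1) - m j * (m j - 1)),
        Finset.sum_Icc_succ_top h1 (fun j => c j - m j),
        Finset.sum_Icc_succ_top h1 (fun i => ∑ j ∈ Icc i (M + 1), (c i - m i) * (m j - c (j + 1)))]
    have h2 : ∑ i ∈ Icc 1 M, ∑ j ∈ Icc i (M + 1), (c i - m i) * (m j - c (j + 1))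
        = ∑ i ∈ Icc 1 M, ∑ j ∈ Icc i M, (c i - m i) * (m j - c (j + 1))
          + (∑ j ∈ Icc 1 M, (c j - m j)) * (m (M + 1) - c (M + 2)) := by
      rw [Finset.sum_mul, ← Finset.sum_add_distrib]
      apply Finset.sum_congr rfl
      intro i hi
      rw [mem_Icc] at hi
      rw [Finset.sum_Icc_succ_top (by omega : i ≤ M + 1)]
    have h3 : ∑ j ∈ Icc (M + 1) (M + 1), (c (M + 1) - m (M + 1)) * (m j - c (j + 1))
        = (c (M + 1) - m (M + 1)) * (m (M + 1) - c (M + 2)) := by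
      simp
    rw [h2, h3]
    linear_combination ih

/-- Let `ν ⊢ n+k` and `μ ⊢ n` with `ν/μ` a vertical strip.  Then
`n(ν) - n(μ) - binom(k,2) = Σ_{1 ≤ i ≤ j} (ν'_i - μ'_i)(μ'_j - ν'_{j+1})`,
where `n(λ) = Σ_{i≥1} (i-1) λ_i`. -/
theorem stmt2 (N n k : ℕ) (nu mu : ℕ → ℕ)
    (hnu : ∀ i j, 1 ≤ i → i ≤ j → nu j ≤ nu i)
    (hnuN : ∀ i, N < i → nu i = 0)
    (hmu : ∀ i j, 1 ≤ i → i ≤ j → mu j ≤ mu i)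
    (hmuN : ∀ i, N < i → mu i = 0)
    (hnusum : ∑ i ∈ Finset.Icc 1 N, nu i = n + k)
    (hmusum : ∑ i ∈ Finset.Icc 1 N, mu i = n)
    (hsub : ∀ i, mu i ≤ nu i)
    (hvs : ∀ i, nu i ≤ mu i + 1) :
    ((∑ i ∈ Finset.Icc 1 N, (i - 1) * nu i : ℕ) : ℤ)
        - ((∑ i ∈ Finset.Icc 1 N, (i - 1) * mu i : ℕ) : ℤ)
        - (Nat.choose k 2 : ℤ)
      = ∑ i ∈ Finset.Icc 1 (nu 1), ∑ j ∈ Finset.Icc i (nu 1),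
          ((conjP N nu i : ℤ) - (conjP N mu i : ℤ))
            * ((conjP N mu j : ℤ) - (conjP N nu (j + 1) : ℤ)) := by
  have hMnu : ∀ i ∈ Icc 1 N, nu i ≤ nu 1 := by
    intro i hi
    rw [mem_Icc] at hi
    exact hnu 1 i le_rfl hi.1
  have hMmu : ∀ i ∈ Icc 1 N, mu i ≤ nu 1 := by
    intro i hi
    exact le_trans (hsub i) (hMnu i hi)
  -- conjP at nu 1 + 1 is zero
  have hzero : conjP N nu (nu 1 + 1) = 0 := by
    unfold conjP
    rw [Finset.card_eq_zero, Finset.filter_eq_empty_iff]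
    intro i hi
    have := hMnu i hi
    omega
  -- the A-sum equals k
  have hA : ∑ j ∈ Icc 1 (nu 1), ((conjP N nu j : ℤ) - (conjP N mu j : ℤ)) = (k : ℤ) := by
    rw [Finset.sum_sub_distrib, ← Nat.cast_sum, ← Nat.cast_sum,
      sum_conjP N (nu 1) nu hMnu, sum_conjP N (nu 1) mu hMmu, hnusum, hmusum]
    push_cast
    ring
  have hXc : ((∑ i ∈ Finset.Icc 1 N, (i - 1) * nu i : ℕ) : ℤ) * 2
      = ∑ j ∈ Icc 1 (nu 1), ((conjP N nu j : ℤ) * ((conjP N nu j : ℤ) - 1)) := by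
    rw [sum_nlam N (nu 1) nu hnu hMnu, Nat.cast_sum, Finset.sum_mul]
    exact Finset.sum_congr rfl fun j _ => cast2 _
  have hYc : ((∑ i ∈ Finset.Icc 1 N, (i - 1) * mu i : ℕ) : ℤ) * 2
      = ∑ j ∈ Icc 1 (nu 1), ((conjP N mu j : ℤ) * ((conjP N mu j : ℤ) - 1)) := by
    rw [sum_nlam N (nu 1) mu hmu hMmu, Nat.cast_sum, Finset.sum_mul]
    exact Finset.sum_congr rfl fun j _ => cast2 _
  have hE := keyE (fun j => (conjP N nu j : ℤ)) (fun j => (conjP N mu j : ℤ)) (nu 1)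
  beta_reduce at hE
  rw [hA, hzero] at hE
  rw [Finset.sum_sub_distrib] at hE
  have hk2 := cast2 k
  push_cast at hE
  linarith [hE, hXc, hYc, hk2]
end

section
/- The principal specialization of the chromatic quasisymmetric function of a natural unit interval order satisfies X_γ(1, q, ..., q^{α−1}; q) = q^{area(γ)} Π_{i=1}^n [α − a_i(γ)]_q, where a_i(γ) is the number of cells in row i below γ and above the diagonal and area(γ) = Σ_i a_i(γ). -/
open Finset Polynomial

attribute [local instance] Classical.propDecidable

noncomputable section

/-- `[n]_q` as a polynomial in `q = X`. -/
def qint (m : ℕ) : Polynomial ℤ := ∑ t ∈ Finset.range m, X ^ t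

/-- `a_i(γ)` : the number of cells in row `i` below the Dyck path with column heights
`h` and strictly above the diagonal, i.e. `#{c : 1 ≤ c < i, i ≤ h c}`. -/
def aH (h : ℕ → ℕ) (i : ℕ) : ℕ := ((Finset.Ico 1 i).filter (fun c => i ≤ h c)).card

lemma qint_zero : qint 0 = 0 := by simp [qint]
lemma qint_succ (m : ℕ) : qint (m+1) = qint m + X ^ m := by simp [qint, Finset.sum_range_succ]

/-- key clique-sum lemma -/
lemma key_s13 (α : ℕ) (S : Finset ℕ) (hS : S ⊆ Finset.range α) :
    ∑ c ∈ Finset.range α \ S, (X : Polynomial ℤ) ^ (c + (S.filter (fun s => c < s)).card)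
      = X ^ S.card * qint (α - S.card) := by
  induction α generalizing S with
  | zero =>
    have : S = ∅ := Finset.subset_empty.mp (by simpa using hS)
    simp [this, qint_zero]
  | succ α ih =>
    by_cases hmem : α ∈ S
    · have hS' : S.erase α ⊆ Finset.range α := by
        intro x hx
        have hx1 := hS (Finset.mem_of_mem_erase hx)
        have hx2 := Finset.ne_of_mem_erase hx
        simp only [Finset.mem_range] at hx1 ⊢
        omega
      have hdiff : Finset.range (α+1) \ S = Finset.range α \ S.erase α := by
        ext x
        simp only [Finset.mem_sdiff, Finset.mem_range, Finset.mem_erase]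
        constructor
        · rintro ⟨h1, h2⟩
          have : x ≠ α := by rintro rfl; exact h2 hmem
          exact ⟨by omega, fun hc => h2 hc.2⟩
        · rintro ⟨h1, h2⟩
          refine ⟨by omega, fun hc => h2 ⟨by omega, hc⟩⟩
      have hcard : S.card = (S.erase α).card + 1 := by
        rw [Finset.card_erase_of_mem hmem]
        have : 1 ≤ S.card := Finset.card_pos.mpr ⟨α, hmem⟩
        omega
      have hfil : ∀ c ∈ Finset.range α \ S.erase α,
          (S.filter (fun s => c < s)).card = ((S.erase α).filter (fun s => c < s)).card + 1 := by
        intro c hc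
        simp only [Finset.mem_sdiff, Finset.mem_range] at hc
        have : S.filter (fun s => c < s) = insert α ((S.erase α).filter (fun s => c < s)) := by
          ext x
          simp only [Finset.mem_filter, Finset.mem_insert, Finset.mem_erase]
          constructor
          · rintro ⟨hx, hcx⟩
            by_cases hxa : x = α
            · left; exact hxa
            · right; exact ⟨⟨hxa, hx⟩, hcx⟩
          · rintro (rfl | ⟨⟨_, hx⟩, hcx⟩)
            · exact ⟨hmem, hc.1⟩
            · exact ⟨hx, hcx⟩
        rw [this, Finset.card_insert_of_notMem]
        simp
      rw [hdiff, Finset.sum_congr rfl (fun c hc => by rw [hfil c hc])]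
      have := ih (S.erase α) hS'
      calc ∑ c ∈ Finset.range α \ S.erase α,
            (X : Polynomial ℤ) ^ (c + (((S.erase α).filter (fun s => c < s)).card + 1))
          = X * ∑ c ∈ Finset.range α \ S.erase α,
            (X : Polynomial ℤ) ^ (c + ((S.erase α).filter (fun s => c < s)).card) := by
            rw [Finset.mul_sum]; apply Finset.sum_congr rfl; intro c hc; ring
        _ = X * (X ^ (S.erase α).card * qint (α - (S.erase α).card)) := by rw [this]
        _ = X ^ S.card * qint (α + 1 - S.card) := by
            rw [hcard]
            have : α + 1 - ((S.erase α).card + 1) = α - (S.erase α).card := by omega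
            rw [this]; ring
    · have hS' : S ⊆ Finset.range α := by
        intro x hx
        have := hS hx
        simp only [Finset.mem_range] at this ⊢
        rcases Nat.lt_succ_iff_lt_or_eq.mp this with h | rfl
        · exact h
        · exact absurd hx hmem
      have hcard : S.card ≤ α := by
        simpa using Finset.card_le_card hS'
      have hdiff : Finset.range (α+1) \ S = insert α (Finset.range α \ S) := by
        ext x
        simp only [Finset.mem_sdiff, Finset.mem_range, Finset.mem_insert]
        constructor
        · rintro ⟨h1, h2⟩
          by_cases hxa : x = α
          · left; exact hxa
          · right; exact ⟨by omega, h2⟩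
        · rintro (rfl | ⟨h1, h2⟩)
          · exact ⟨by omega, hmem⟩
          · exact ⟨by omega, h2⟩
      rw [hdiff, Finset.sum_insert (by simp)]
      have hfα : (S.filter (fun s => α < s)).card = 0 := by
        rw [Finset.card_eq_zero, Finset.filter_eq_empty_iff]
        intro x hx
        have := hS' hx
        simp only [Finset.mem_range] at this
        omega
      rw [hfα, ih S hS']
      have h1 : α + 1 - S.card = (α - S.card) + 1 := by omega
      rw [h1, qint_succ]
      rw [mul_add, ← pow_add]
      have h2 : S.card + (α - S.card) = α + 0 := by omega
      rw [h2]
      ring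

lemma inner (α n H : ℕ) (hH1 : 1 ≤ H) (hH2 : H ≤ n + 1) (g : Fin n → Fin α)
    (hinj : ∀ i j : Fin n, (i:ℕ)+2 ≤ H → (j:ℕ)+2 ≤ H → g i = g j → i = j) :
    ∑ c : Fin α, (if ∀ j : Fin n, (j:ℕ)+2 ≤ H → c ≠ g j then
        (X : Polynomial ℤ) ^ ((c:ℕ) +
          (Finset.univ.filter (fun j : Fin n => (j:ℕ)+2 ≤ H ∧ c < g j)).card) else 0)
      = X ^ (H-1) * qint (α - (H-1)) := by
  classical
  set N : Finset (Fin n) := Finset.univ.filter (fun j : Fin n => (j:ℕ)+2 ≤ H) with hN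
  set S : Finset ℕ := N.image (fun j => ((g j : ℕ))) with hSdef
  have hmemN : ∀ j : Fin n, j ∈ N ↔ (j:ℕ)+2 ≤ H := by
    intro j; simp [hN]
  have hinjOn : Set.InjOn (fun j => ((g j : ℕ))) N := by
    intro i hi j hj hij
    exact hinj i j ((hmemN i).mp hi) ((hmemN j).mp hj) (Fin.ext hij)
  have hScard : S.card = H - 1 := by
    rw [hSdef, Finset.card_image_of_injOn hinjOn]
    rw [Finset.card_bij (fun (j : Fin n) _ => (j : ℕ)) ?_ ?_ ?_]
    · exact (Finset.card_range (H-1))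
    · intro j hj
      have := (hmemN j).mp hj
      simp only [Finset.mem_range]; omega
    · intro i hi j hj hij; exact Fin.ext hij
    · intro b hb
      simp only [Finset.mem_range] at hb
      have hbn : b < n := by omega
      exact ⟨⟨b, hbn⟩, (hmemN _).mpr (by simp; omega), rfl⟩
  have hSsub : S ⊆ Finset.range α := by
    intro x hx
    simp only [hSdef, Finset.mem_image] at hx
    obtain ⟨j, _, rfl⟩ := hx
    simp [Fin.is_lt]
  -- rewrite summand as function of (c:ℕ)
  have hsummand : ∀ c : Fin α,
      (if ∀ j : Fin n, (j:ℕ)+2 ≤ H → c ≠ g j then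
        (X : Polynomial ℤ) ^ ((c:ℕ) +
          (Finset.univ.filter (fun j : Fin n => (j:ℕ)+2 ≤ H ∧ c < g j)).card) else 0)
      = (if (c:ℕ) ∉ S then
        (X : Polynomial ℤ) ^ ((c:ℕ) + (S.filter (fun s => (c:ℕ) < s)).card) else 0) := by
    intro c
    have hiff : (∀ j : Fin n, (j:ℕ)+2 ≤ H → c ≠ g j) ↔ (c:ℕ) ∉ S := by
      simp only [hSdef, Finset.mem_image, not_exists, not_and]
      constructor
      · rintro hc j hj hcj
        exact hc j ((hmemN j).mp hj) (Fin.ext hcj.symm)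
      · intro hc j hj hcj
        exact hc j ((hmemN j).mpr hj) (by rw [hcj])
    have hfil : (Finset.univ.filter (fun j : Fin n => (j:ℕ)+2 ≤ H ∧ c < g j)).card
        = (S.filter (fun s => (c:ℕ) < s)).card := by
      have h1 : Finset.univ.filter (fun j : Fin n => (j:ℕ)+2 ≤ H ∧ c < g j)
          = N.filter (fun j => c < g j) := by
        simp [hN, Finset.filter_filter]
      have h2 : S.filter (fun s => (c:ℕ) < s)
          = (N.filter (fun j => c < g j)).image (fun j => ((g j : ℕ))) := by
        ext x
        simp only [Finset.mem_filter, Finset.mem_image, hSdef]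
        constructor
        · rintro ⟨⟨j, hj, rfl⟩, hcx⟩
          exact ⟨j, ⟨hj, hcx⟩, rfl⟩
        · rintro ⟨j, ⟨hj, hcj⟩, rfl⟩
          exact ⟨⟨j, hj, rfl⟩, hcj⟩
      rw [h1, h2, Finset.card_image_of_injOn]
      exact hinjOn.mono (fun x hx => Finset.mem_of_mem_filter x hx)
    rw [hfil]; exact if_congr hiff rfl rfl
  rw [Finset.sum_congr rfl (fun c _ => hsummand c)]
  rw [Fin.sum_univ_eq_sum_range (fun c =>
    (if c ∉ S then (X : Polynomial ℤ) ^ (c + (S.filter (fun s => c < s)).card) else 0))]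
  rw [← Finset.sum_filter, Finset.filter_not]
  have heq : Finset.range α \ Finset.filter (fun a => a ∈ S) (Finset.range α)
      = Finset.range α \ S := by
    rw [Finset.filter_mem_eq_inter, Finset.sdiff_inter_self_left]
  rw [heq, key_s13 α S hSsub, hScard]

lemma reshuffle_prod {M : Type*} [CommMonoid M] (F : ℕ → M) (n H : ℕ)
    (hH1 : 1 ≤ H) (hH2 : H ≤ n+1) (a a' : ℕ → ℕ)
    (h1 : ∀ i, 1 ≤ i → i ≤ H → a i = i - 1)
    (h2 : ∀ k, 1 ≤ k → k ≤ H - 1 → a' k = k - 1)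
    (h3 : ∀ k, H ≤ k → k ≤ n → a' k = a (k+1)) :
    ∏ i ∈ Finset.Icc 1 (n+1), F (a i) = F (H-1) * ∏ k ∈ Finset.Icc 1 n, F (a' k) := by
  have e1 : Finset.Icc 1 (n+1) = Finset.Ico 1 (n+2) := by rw [← Finset.Ico_add_one_right_eq_Icc]; rfl
  have e2 : Finset.Icc 1 n = Finset.Ico 1 (n+1) := by rw [← Finset.Ico_add_one_right_eq_Icc]
  rw [e1, e2]
  rw [← Finset.prod_Ico_consecutive (fun i => F (a i)) (by omega : 1 ≤ H+1) (by omega : H+1 ≤ n+2)]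
  rw [← Finset.prod_Ico_consecutive (fun k => F (a' k)) (by omega : 1 ≤ H) (by omega : H ≤ n+1)]
  have p1 : ∏ i ∈ Finset.Ico 1 (H+1), F (a i) = ∏ i ∈ Finset.range H, F i := by
    rw [Finset.prod_Ico_eq_prod_range]
    simp only [Nat.add_sub_cancel]
    apply Finset.prod_congr rfl
    intro i hi
    simp only [Finset.mem_range] at hi
    rw [h1 (1+i) (by omega) (by omega)]
    congr 1; omega
  have p2 : ∏ k ∈ Finset.Ico 1 H, F (a' k) = ∏ i ∈ Finset.range (H-1), F i := by
    rw [Finset.prod_Ico_eq_prod_range]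
    apply Finset.prod_congr rfl
    intro i hi
    simp only [Finset.mem_range] at hi
    rw [h2 (1+i) (by omega) (by omega)]
    congr 1; omega
  have p3 : ∏ i ∈ Finset.Ico (H+1) (n+2), F (a i) = ∏ k ∈ Finset.Ico H (n+1), F (a' k) := by
    rw [Finset.prod_Ico_eq_prod_range, Finset.prod_Ico_eq_prod_range]
    have : n + 2 - (H+1) = n + 1 - H := by omega
    rw [this]
    apply Finset.prod_congr rfl
    intro i hi
    simp only [Finset.mem_range] at hi
    rw [h3 (H+i) (by omega) (by omega)]
    have e : H+1+i = H+i+1 := by omega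
    rw [e]
  rw [p1, p2, p3]
  have p4 : ∏ i ∈ Finset.range H, F i = (∏ i ∈ Finset.range (H-1), F i) * F (H-1) := by
    have : H = (H-1) + 1 := by omega
    rw [this, Finset.prod_range_succ]
    congr 1 <;> rw [← this]
  rw [p4, mul_assoc, mul_comm (F (H-1)), ← mul_assoc, mul_comm _ (F (H-1))]

lemma reshuffle_sum (F : ℕ → ℕ) (n H : ℕ)
    (hH1 : 1 ≤ H) (hH2 : H ≤ n+1) (a a' : ℕ → ℕ)
    (h1 : ∀ i, 1 ≤ i → i ≤ H → a i = i - 1)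
    (h2 : ∀ k, 1 ≤ k → k ≤ H - 1 → a' k = k - 1)
    (h3 : ∀ k, H ≤ k → k ≤ n → a' k = a (k+1)) :
    ∑ i ∈ Finset.Icc 1 (n+1), F (a i) = F (H-1) + ∑ k ∈ Finset.Icc 1 n, F (a' k) := by
  have e1 : Finset.Icc 1 (n+1) = Finset.Ico 1 (n+2) := by rw [← Finset.Ico_add_one_right_eq_Icc]; rfl
  have e2 : Finset.Icc 1 n = Finset.Ico 1 (n+1) := by rw [← Finset.Ico_add_one_right_eq_Icc]
  rw [e1, e2]
  rw [← Finset.sum_Ico_consecutive (fun i => F (a i)) (by omega : 1 ≤ H+1) (by omega : H+1 ≤ n+2)]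
  rw [← Finset.sum_Ico_consecutive (fun k => F (a' k)) (by omega : 1 ≤ H) (by omega : H ≤ n+1)]
  have p1 : ∑ i ∈ Finset.Ico 1 (H+1), F (a i) = ∑ i ∈ Finset.range H, F i := by
    rw [Finset.sum_Ico_eq_sum_range]
    simp only [Nat.add_sub_cancel]
    apply Finset.sum_congr rfl
    intro i hi
    simp only [Finset.mem_range] at hi
    rw [h1 (1+i) (by omega) (by omega)]
    congr 1; omega
  have p2 : ∑ k ∈ Finset.Ico 1 H, F (a' k) = ∑ i ∈ Finset.range (H-1), F i := by
    rw [Finset.sum_Ico_eq_sum_range]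
    apply Finset.sum_congr rfl
    intro i hi
    simp only [Finset.mem_range] at hi
    rw [h2 (1+i) (by omega) (by omega)]
    congr 1; omega
  have p3 : ∑ i ∈ Finset.Ico (H+1) (n+2), F (a i) = ∑ k ∈ Finset.Ico H (n+1), F (a' k) := by
    rw [Finset.sum_Ico_eq_sum_range, Finset.sum_Ico_eq_sum_range]
    have : n + 2 - (H+1) = n + 1 - H := by omega
    rw [this]
    apply Finset.sum_congr rfl
    intro i hi
    simp only [Finset.mem_range] at hi
    rw [h3 (H+i) (by omega) (by omega)]
    have e : H+1+i = H+i+1 := by omega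
    rw [e]
  rw [p1, p2, p3]
  have p4 : ∑ i ∈ Finset.range H, F i = (∑ i ∈ Finset.range (H-1), F i) + F (H-1) := by
    have : H = (H-1) + 1 := by omega
    rw [this, Finset.sum_range_succ]
    congr 1 <;> rw [← this]
  rw [p4]
  omega

-- aH facts
lemma aH_small (h : ℕ → ℕ) (n : ℕ)
    (hDyck : ∀ i, 1 ≤ i → i ≤ n+1 → i ≤ h i ∧ h i ≤ n+1)
    (hMono : ∀ i j, 1 ≤ i → i ≤ j → j ≤ n+1 → h i ≤ h j)
    (i : ℕ) (hi1 : 1 ≤ i) (hi2 : i ≤ h 1) : aH h i = i - 1 := by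
  have hh1 : h 1 ≤ n + 1 := (hDyck 1 le_rfl (by omega)).2
  unfold aH
  rw [Finset.filter_true_of_mem, Nat.card_Ico]
  intro c hc
  simp only [Finset.mem_Ico] at hc
  have : h 1 ≤ h c := hMono 1 c le_rfl hc.1 (by omega)
  omega

lemma aH_shift (h : ℕ → ℕ) (n : ℕ)
    (hDyck : ∀ i, 1 ≤ i → i ≤ n+1 → i ≤ h i ∧ h i ≤ n+1)
    (k : ℕ) (hk1 : 1 ≤ k) (hk2 : k ≤ n) :
    aH (fun i => h (i+1) - 1) k + (if k + 1 ≤ h 1 then 1 else 0) = aH h (k+1) := by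
  unfold aH
  have step1 : ((Finset.Ico 1 k).filter (fun c => k ≤ h (c+1) - 1)).card
      = ((Finset.Ico 2 (k+1)).filter (fun c => k+1 ≤ h c)).card := by
    apply Finset.card_bij (fun c _ => c + 1)
    · intro c hc
      simp only [Finset.mem_filter, Finset.mem_Ico] at hc ⊢
      have hge : c + 1 ≤ h (c+1) := (hDyck (c+1) (by omega) (by omega)).1
      omega
    · intro a ha b hb hab; omega
    · intro b hb
      simp only [Finset.mem_filter, Finset.mem_Ico] at hb
      refine ⟨b - 1, ?_, by omega⟩
      simp only [Finset.mem_filter, Finset.mem_Ico]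
      have : b - 1 + 1 = b := by omega
      rw [this]
      have hge : 1 ≤ h b := by
        have := (hDyck b (by omega) (by omega)).1
        omega
      omega
  have step2 : (Finset.Ico 1 (k+1)).filter (fun c => k+1 ≤ h c)
      = if k + 1 ≤ h 1 then insert 1 ((Finset.Ico 2 (k+1)).filter (fun c => k+1 ≤ h c))
        else (Finset.Ico 2 (k+1)).filter (fun c => k+1 ≤ h c) := by
    split_ifs with hcase
    · ext c
      simp only [Finset.mem_filter, Finset.mem_Ico, Finset.mem_insert]
      constructor
      · rintro ⟨⟨hc1, hc2⟩, hc3⟩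
        rcases Nat.eq_or_lt_of_le hc1 with rfl | h2
        · left; rfl
        · right; exact ⟨⟨by omega, hc2⟩, hc3⟩
      · rintro (rfl | ⟨⟨hc1, hc2⟩, hc3⟩)
        · exact ⟨⟨le_rfl, by omega⟩, hcase⟩
        · exact ⟨⟨by omega, hc2⟩, hc3⟩
    · ext c
      simp only [Finset.mem_filter, Finset.mem_Ico]
      constructor
      · rintro ⟨⟨hc1, hc2⟩, hc3⟩
        rcases Nat.eq_or_lt_of_le hc1 with rfl | h2
        · exact absurd hc3 hcase
        · exact ⟨⟨by omega, hc2⟩, hc3⟩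
      · rintro ⟨⟨hc1, hc2⟩, hc3⟩
        exact ⟨⟨by omega, hc2⟩, hc3⟩
  rw [step1, step2]
  split_ifs with hcase
  · rw [Finset.card_insert_of_notMem (by simp)]
  · simp

lemma main (α : ℕ) : ∀ (n : ℕ) (h : ℕ → ℕ),
    (∀ i, 1 ≤ i → i ≤ n → i ≤ h i ∧ h i ≤ n) →
    (∀ i j, 1 ≤ i → i ≤ j → j ≤ n → h i ≤ h j) →
    (∑ κ ∈ Finset.univ.filter (fun κ : Fin n → Fin α =>
        ∀ i j : Fin n, i < j → ((j : ℕ) + 1 ≤ h ((i : ℕ) + 1)) → κ i ≠ κ j),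
      (X : Polynomial ℤ) ^
        ((Finset.univ.filter (fun p : Fin n × Fin n =>
            p.1 < p.2 ∧ ((p.2 : ℕ) + 1 ≤ h ((p.1 : ℕ) + 1)) ∧ κ p.1 < κ p.2)).card
          + ∑ v : Fin n, (κ v : ℕ))
      = X ^ (∑ i ∈ Finset.Icc 1 n, aH h i) * ∏ i ∈ Finset.Icc 1 n, qint (α - aH h i)) := by
  intro n
  induction n with
  | zero =>
    intro h _ _
    have hfil : (Finset.univ.filter (fun κ : Fin 0 → Fin α =>
        ∀ i j : Fin 0, i < j → ((j : ℕ) + 1 ≤ h ((i : ℕ) + 1)) → κ i ≠ κ j)) = Finset.univ := by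
      apply Finset.filter_true_of_mem; intro κ _ i; exact i.elim0
    rw [hfil]
    simp
  | succ n ih =>
    intro h hDyck hMono
    have hH1 : 1 ≤ h 1 := (hDyck 1 le_rfl (by omega)).1
    have hH2 : h 1 ≤ n + 1 := (hDyck 1 le_rfl (by omega)).2
    have hDyck' : ∀ i, 1 ≤ i → i ≤ n → i ≤ h (i+1) - 1 ∧ h (i+1) - 1 ≤ n := by
      intro i hi1 hi2
      have := hDyck (i+1) (by omega) (by omega)
      omega
    have hMono' : ∀ i j, 1 ≤ i → i ≤ j → j ≤ n → h (i+1) - 1 ≤ h (j+1) - 1 := by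
      intro i j hi hij hj
      have := hMono (i+1) (j+1) (by omega) (by omega) (by omega)
      omega
    -- the proper-coloring predicate splits
    have hP : ∀ (c : Fin α) (g : Fin n → Fin α),
        (∀ i j : Fin (n+1), i < j → ((j : ℕ) + 1 ≤ h ((i : ℕ) + 1)) →
            (Fin.cons c g : Fin (n+1) → Fin α) i ≠ (Fin.cons c g : Fin (n+1) → Fin α) j)
        ↔ ((∀ j : Fin n, (j:ℕ)+2 ≤ h 1 → c ≠ g j) ∧
           (∀ i j : Fin n, i < j → ((j : ℕ) + 1 ≤ h ((i : ℕ) + 1 + 1) - 1) → g i ≠ g j)) := by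
      intro c g
      constructor
      · intro hp
        constructor
        · intro j hj
          have := hp 0 j.succ (Fin.succ_pos j) (by simp; omega)
          simpa using this
        · intro i j hij hedge
          have hh : 1 ≤ h ((i:ℕ) + 2) := by
            have := hDyck ((i:ℕ)+2) (by omega) (by have := i.isLt; omega)
            omega
          have := hp i.succ j.succ (by simpa [Fin.succ_lt_succ_iff] using hij)
            (by simp only [Fin.val_succ]; omega)
          simpa using this
      · rintro ⟨h0, hQ⟩ i j hij hedge
        induction i using Fin.cases with
        | zero =>
          induction j using Fin.cases with
          | zero => exact absurd hij (lt_irrefl _)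
          | succ j' =>
            simp only [Fin.cons_zero, Fin.cons_succ]
            exact h0 j' (by simp at hedge ⊢; omega)
        | succ i' =>
          induction j using Fin.cases with
          | zero => exact absurd hij (by simp [Fin.lt_iff_val_lt_val])
          | succ j' =>
            simp only [Fin.cons_succ]
            have hh : 1 ≤ h ((i':ℕ) + 2) := by
              have := hDyck ((i':ℕ)+2) (by omega) (by have := i'.isLt; omega)
              omega
            refine hQ i' j' (by simpa [Fin.succ_lt_succ_iff] using hij) ?_
            simp only [Fin.val_succ] at hedge
            omega
    -- the ascent statistic splits
    have hE : ∀ (c : Fin α) (g : Fin n → Fin α),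
        (Finset.univ.filter (fun p : Fin (n+1) × Fin (n+1) =>
            p.1 < p.2 ∧ ((p.2 : ℕ) + 1 ≤ h ((p.1 : ℕ) + 1)) ∧
              (Fin.cons c g : Fin (n+1) → Fin α) p.1 < (Fin.cons c g : Fin (n+1) → Fin α) p.2)).card
        = (Finset.univ.filter (fun p : Fin n × Fin n =>
            p.1 < p.2 ∧ ((p.2 : ℕ) + 1 ≤ h ((p.1 : ℕ) + 1 + 1) - 1) ∧ g p.1 < g p.2)).card
          + (Finset.univ.filter (fun j : Fin n => (j:ℕ)+2 ≤ h 1 ∧ c < g j)).card := by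
      intro c g
      rw [Finset.card_filter, Finset.card_filter, Finset.card_filter,
        Fintype.sum_prod_type, Fintype.sum_prod_type, Fin.sum_univ_succ]
      simp only [Fin.sum_univ_succ, Fin.cons_zero, Fin.cons_succ, Fin.val_succ, Fin.val_zero]
      have t1 : ∀ x : Fin n, (if 0 < Fin.succ x ∧ (x:ℕ) + 1 + 1 ≤ h (0 + 1) ∧ c < g x then (1:ℕ) else 0)
          = (if (x:ℕ) + 2 ≤ h 1 ∧ c < g x then 1 else 0) := by
        intro x
        have e : h (0+1) = h 1 := by norm_num
        refine if_congr ?_ rfl rfl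
        rw [e]
        constructor
        · rintro ⟨_, h2, h3⟩; exact ⟨by omega, h3⟩
        · rintro ⟨h2, h3⟩; exact ⟨Fin.succ_pos x, by omega, h3⟩
      have t2 : ∀ x x1 : Fin n, (if Fin.succ x < Fin.succ x1 ∧ (x1:ℕ) + 1 + 1 ≤ h ((x:ℕ) + 1 + 1) ∧ g x < g x1 then (1:ℕ) else 0)
          = (if x < x1 ∧ (x1:ℕ) + 1 ≤ h ((x:ℕ) + 1 + 1) - 1 ∧ g x < g x1 then 1 else 0) := by
        intro x x1
        have hh : 1 ≤ h ((x:ℕ) + 1 + 1) := by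
          have := hDyck ((x:ℕ)+1+1) (by omega) (by have := x.isLt; omega)
          omega
        refine if_congr ?_ rfl rfl
        rw [Fin.succ_lt_succ_iff]
        constructor
        · rintro ⟨h1', h2, h3⟩; exact ⟨h1', by omega, h3⟩
        · rintro ⟨h1', h2, h3⟩; exact ⟨h1', by omega, h3⟩
      simp only [t1, t2, lt_irrefl, false_and, if_false, Fin.not_lt_zero, zero_add, add_zero]
      exact add_comm _ _
    -- abbreviations
    set C : Polynomial ℤ := X ^ (h 1 - 1) * qint (α - (h 1 - 1)) with hC
    -- the inner sum over the color of vertex 0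
    have hinner : ∀ g : Fin n → Fin α,
        (∑ c : Fin α, if (∀ i j : Fin (n+1), i < j → ((j : ℕ) + 1 ≤ h ((i : ℕ) + 1)) →
              (Fin.cons c g : Fin (n+1) → Fin α) i ≠ (Fin.cons c g : Fin (n+1) → Fin α) j) then
            (X : Polynomial ℤ) ^
              ((Finset.univ.filter (fun p : Fin (n+1) × Fin (n+1) =>
                  p.1 < p.2 ∧ ((p.2 : ℕ) + 1 ≤ h ((p.1 : ℕ) + 1)) ∧
                    (Fin.cons c g : Fin (n+1) → Fin α) p.1 < (Fin.cons c g : Fin (n+1) → Fin α) p.2)).card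
                + ∑ v : Fin (n+1), ((Fin.cons c g : Fin (n+1) → Fin α) v : ℕ))
          else 0)
        = (if (∀ i j : Fin n, i < j → ((j : ℕ) + 1 ≤ h ((i : ℕ) + 1 + 1) - 1) → g i ≠ g j) then
            (X : Polynomial ℤ) ^
              ((Finset.univ.filter (fun p : Fin n × Fin n =>
                  p.1 < p.2 ∧ ((p.2 : ℕ) + 1 ≤ h ((p.1 : ℕ) + 1 + 1) - 1) ∧ g p.1 < g p.2)).card
                + ∑ v : Fin n, (g v : ℕ))
          else 0) * C := by
      intro g
      by_cases hQ : ∀ i j : Fin n, i < j → ((j : ℕ) + 1 ≤ h ((i : ℕ) + 1 + 1) - 1) → g i ≠ g j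
      · have hinj : ∀ i j : Fin n, (i:ℕ)+2 ≤ h 1 → (j:ℕ)+2 ≤ h 1 → g i = g j → i = j := by
          intro i j hi hj hgij
          by_contra hne
          rcases lt_or_gt_of_ne hne with hlt | hgt
          · refine hQ i j hlt ?_ hgij
            have := hMono 1 ((i:ℕ)+1+1) le_rfl (by omega) (by have := i.isLt; omega)
            omega
          · refine hQ j i hgt ?_ hgij.symm
            have := hMono 1 ((j:ℕ)+1+1) le_rfl (by omega) (by have := j.isLt; omega)
            omega
        have hIN := inner α n (h 1) hH1 hH2 g hinj
        rw [if_pos hQ]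
        have hterm : ∀ c : Fin α,
            (if (∀ i j : Fin (n+1), i < j → ((j : ℕ) + 1 ≤ h ((i : ℕ) + 1)) →
                (Fin.cons c g : Fin (n+1) → Fin α) i ≠ (Fin.cons c g : Fin (n+1) → Fin α) j) then
              (X : Polynomial ℤ) ^
                ((Finset.univ.filter (fun p : Fin (n+1) × Fin (n+1) =>
                    p.1 < p.2 ∧ ((p.2 : ℕ) + 1 ≤ h ((p.1 : ℕ) + 1)) ∧
                      (Fin.cons c g : Fin (n+1) → Fin α) p.1 < (Fin.cons c g : Fin (n+1) → Fin α) p.2)).card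
                  + ∑ v : Fin (n+1), ((Fin.cons c g : Fin (n+1) → Fin α) v : ℕ))
            else 0)
            = ((X : Polynomial ℤ) ^
                ((Finset.univ.filter (fun p : Fin n × Fin n =>
                    p.1 < p.2 ∧ ((p.2 : ℕ) + 1 ≤ h ((p.1 : ℕ) + 1 + 1) - 1) ∧ g p.1 < g p.2)).card
                  + ∑ v : Fin n, (g v : ℕ))) *
              (if (∀ j : Fin n, (j:ℕ)+2 ≤ h 1 → c ≠ g j) then
                (X : Polynomial ℤ) ^ ((c:ℕ) +
                  (Finset.univ.filter (fun j : Fin n => (j:ℕ)+2 ≤ h 1 ∧ c < g j)).card) else 0) := by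
          intro c
          have hsumv : (∑ v : Fin (n+1), ((Fin.cons c g : Fin (n+1) → Fin α) v : ℕ))
              = (c:ℕ) + ∑ v : Fin n, (g v : ℕ) := by
            rw [Fin.sum_univ_succ]
            simp [Fin.cons_zero, Fin.cons_succ]
          rw [hE c g, hsumv]
          rw [if_congr (hP c g) rfl rfl]
          by_cases hR : ∀ j : Fin n, (j:ℕ)+2 ≤ h 1 → c ≠ g j
          · rw [if_pos ⟨hR, hQ⟩, if_pos hR, ← pow_add]
            congr 1
            ring
          · rw [if_neg (fun hand => hR hand.1), if_neg hR, mul_zero]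
        rw [Finset.sum_congr rfl (fun c _ => hterm c), ← Finset.mul_sum, hIN, hC]
      · rw [if_neg hQ, zero_mul]
        apply Finset.sum_eq_zero
        intro c _
        rw [if_neg]
        intro hp
        exact hQ ((hP c g).mp hp).2
    -- main computation
    rw [Finset.sum_filter]
    have hsplit : (∑ κ : Fin (n+1) → Fin α,
        if (∀ i j : Fin (n+1), i < j → ((j : ℕ) + 1 ≤ h ((i : ℕ) + 1)) → κ i ≠ κ j) then
          (X : Polynomial ℤ) ^
            ((Finset.univ.filter (fun p : Fin (n+1) × Fin (n+1) =>
                p.1 < p.2 ∧ ((p.2 : ℕ) + 1 ≤ h ((p.1 : ℕ) + 1)) ∧ κ p.1 < κ p.2)).card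
              + ∑ v : Fin (n+1), (κ v : ℕ))
        else 0)
        = ∑ g : Fin n → Fin α, ∑ c : Fin α,
          (if (∀ i j : Fin (n+1), i < j → ((j : ℕ) + 1 ≤ h ((i : ℕ) + 1)) →
              (Fin.cons c g : Fin (n+1) → Fin α) i ≠ (Fin.cons c g : Fin (n+1) → Fin α) j) then
            (X : Polynomial ℤ) ^
              ((Finset.univ.filter (fun p : Fin (n+1) × Fin (n+1) =>
                  p.1 < p.2 ∧ ((p.2 : ℕ) + 1 ≤ h ((p.1 : ℕ) + 1)) ∧
                    (Fin.cons c g : Fin (n+1) → Fin α) p.1 < (Fin.cons c g : Fin (n+1) → Fin α) p.2)).card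
                + ∑ v : Fin (n+1), ((Fin.cons c g : Fin (n+1) → Fin α) v : ℕ))
          else 0) := by
      rw [← (Fintype.sum_equiv (Fin.consEquiv (fun _ : Fin (n+1) => Fin α)) _ _ (fun p => rfl))]
      rw [Fintype.sum_prod_type]
      exact Finset.sum_comm
    rw [hsplit, Finset.sum_congr rfl (fun g _ => hinner g), ← Finset.sum_mul]
    have IH := ih (fun i => h (i+1) - 1) hDyck' hMono'
    beta_reduce at IH
    rw [← Finset.sum_filter, IH]
    -- bookkeeping for aH
    have f1 : ∀ i, 1 ≤ i → i ≤ h 1 → aH h i = i - 1 := fun i hi1 hi2 =>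
      aH_small h n hDyck hMono i hi1 hi2
    have f2 : ∀ k, 1 ≤ k → k ≤ h 1 - 1 → aH (fun i => h (i+1) - 1) k = k - 1 := by
      intro k hk1 hk2
      have := aH_shift h n hDyck k hk1 (by omega)
      rw [if_pos (by omega : k + 1 ≤ h 1)] at this
      have := f1 (k+1) (by omega) (by omega)
      omega
    have f3 : ∀ k, h 1 ≤ k → k ≤ n → aH (fun i => h (i+1) - 1) k = aH h (k+1) := by
      intro k hk1 hk2
      have := aH_shift h n hDyck k (by omega) hk2
      rw [if_neg (by omega : ¬ (k + 1 ≤ h 1))] at this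
      omega
    have hsum := reshuffle_sum (fun m => m) n (h 1) hH1 hH2 (aH h)
      (aH (fun i => h (i+1) - 1)) f1 f2 f3
    have hprod := reshuffle_prod (fun m => qint (α - m)) n (h 1) hH1 hH2 (aH h)
      (aH (fun i => h (i+1) - 1)) f1 f2 f3
    beta_reduce at hsum hprod
    rw [hsum, hprod, pow_add]
    ring

/-- Principal specialization of the chromatic quasisymmetric function of the natural
unit interval order given by a Dyck path `γ` with column heights `h` (vertices
`1, …, n`, edge `{i,j}` for `i < j ≤ h i`):
`X_γ(1, q, …, q^{α-1}; q) = q^{area(γ)} Π_{i=1}^n [α - a_i(γ)]_q`.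

The left side is the sum over proper colorings `κ : [n] → [α]` of
`q^{asc(κ)} Π_v q^{κ(v)-1}` (vertices and colors are encoded by `Fin n`, `Fin α`,
shifted by one). -/
theorem stmt13 (n α : ℕ) (h : ℕ → ℕ)
    (hDyck : ∀ i, 1 ≤ i → i ≤ n → i ≤ h i ∧ h i ≤ n)
    (hMono : ∀ i j, 1 ≤ i → i ≤ j → j ≤ n → h i ≤ h j) :
    ∑ κ ∈ Finset.univ.filter (fun κ : Fin n → Fin α =>
        ∀ i j : Fin n, i < j → ((j : ℕ) + 1 ≤ h ((i : ℕ) + 1)) → κ i ≠ κ j),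
      (X : Polynomial ℤ) ^
        ((Finset.univ.filter (fun p : Fin n × Fin n =>
            p.1 < p.2 ∧ ((p.2 : ℕ) + 1 ≤ h ((p.1 : ℕ) + 1)) ∧ κ p.1 < κ p.2)).card
          + ∑ v : Fin n, (κ v : ℕ))
      = X ^ (∑ i ∈ Finset.Icc 1 n, aH h i) * ∏ i ∈ Finset.Icc 1 n, qint (α - aH h i) := by
  exact main α n h hDyck hMono
end
end
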